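/- Let 𝒩 = (X,a) be an irreducible network with associated random walk P, and Γ ≤ Aut(X,P) with all stabilizers |Γ_x| finite, such that for some fundamental domain D of Γ\X one has Σ_{x∈D} m(x)/|Γ_x| < ∞, where m is the total conductance. Then for any o ∈ X, the random walk on X started at any point meets the orbit Γ·o infinitely often almost surely. -/

import Mathlib

open scoped Classical

noncomputable section

variable {X : Type*} {Γ : Type*}

/-- `n`-step transition probabilities of a kernel. -/
noncomputable def stepPow (p : X → X → ℝ) : ℕ → X → X → ℝ
  | 0, x, y => if x = y then 1 else 0
  | n + 1, x, y => ∑' z, p x z * stepPow p n z y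

/-- Irreducibility of the chain. -/
def ChainIrreducible (p : X → X → ℝ) : Prop :=
  ∀ x y, ∃ n, 0 < stepPow p n x y

/-- `(X, a)` is a network: `a` is symmetric nonnegative and every total conductance
`m(x) = Σ_y a(x,y)` is finite and positive. -/
def IsNetwork (a : X → X → ℝ) : Prop :=
  (∀ x y, 0 ≤ a x y) ∧ (∀ x y, a x y = a y x) ∧
    (∀ x, Summable (a x)) ∧ (∀ x, 0 < ∑' y, a x y)

/-- The Markov chain associated to a network: `p(x,y) = a(x,y)/m(x)`. -/
noncomputable def networkChain (a : X → X → ℝ) (x y : X) : ℝ :=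
  a x y / ∑' z, a x z

/-- The quotient conductance on `Γ\X`, computed at a lift `x`:
`a'(x̄, c) = (1/|Γ_x|) · Σ_{y' ∈ π⁻¹(c)} a(x, y')`. -/
noncomputable def quotCond [Group Γ] [MulAction Γ X] (a : X → X → ℝ)
    (x : X) (c : Quotient (MulAction.orbitRel Γ X)) : ℝ :=
  (Nat.card (MulAction.stabilizer Γ x) : ℝ)⁻¹ *
    ∑' y, if Quotient.mk (MulAction.orbitRel Γ X) y = c then a x y else 0

/-- First-entrance distribution of `Y`: `alphaHit p Y n x y` is the probability, starting at
`x`, that the walk first meets `Y` at time `n` (times `≥ 0`) and does so at the point `y`. -/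
noncomputable def alphaHit (p : X → X → ℝ) (Y : Set X) : ℕ → X → X → ℝ
  | 0, x, y => if x = y ∧ x ∈ Y then 1 else 0
  | n + 1, x, y => if x ∈ Y then 0 else ∑' z, p x z * alphaHit p Y n z y

/-- Distribution of the first visit of `Y` at a time `≥ 1`, occurring at time `n+1`. -/
noncomputable def firstHit (p : X → X → ℝ) (Y : Set X) (n : ℕ) (x y : X) : ℝ :=
  ∑' z, p x z * alphaHit p Y n z y

/-- The induced chain on `Y`: `q x y = P_x(Z_{τ₁} = y)`. -/
noncomputable def inducedQ (p : X → X → ℝ) (Y : Set X) (x y : X) : ℝ :=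
  ∑' n, firstHit p Y n x y

/-- Distribution of the position of the walk at the `k`-th visit time `τ_k` of `Y`. -/
noncomputable def visitDist (p : X → X → ℝ) (Y : Set X) : ℕ → X → X → ℝ
  | 0, x, y => ∑' n, alphaHit p Y n x y
  | k + 1, x, y => (∑' z, visitDist p Y k x z * inducedQ p Y z y : ℝ)

/-- A fundamental domain for the `Γ`-action: a set meeting every orbit exactly once. -/
def IsFundDomain [Group Γ] [MulAction Γ X] (D : Set X) : Prop :=
  ∀ x : X, ∃! d, d ∈ D ∧ x ∈ MulAction.orbit Γ d


open scoped ENNReal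

namespace WalkAux

variable {X : Type*}

noncomputable def stepE (q : X → X → ℝ≥0∞) : ℕ → X → X → ℝ≥0∞
  | 0, x, y => if x = y then 1 else 0
  | n + 1, x, y => ∑' z, q x z * stepE q n z y

noncomputable def alphaE (q : X → X → ℝ≥0∞) (Y : Set X) : ℕ → X → X → ℝ≥0∞
  | 0, x, y => if x = y ∧ x ∈ Y then 1 else 0
  | n + 1, x, y => if x ∈ Y then 0 else ∑' z, q x z * alphaE q Y n z y

noncomputable def gE (q : X → X → ℝ≥0∞) (Y : Set X) (n : ℕ) (x : X) : ℝ≥0∞ :=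
  ∑' y, alphaE q Y n x y

noncomputable def hitE (q : X → X → ℝ≥0∞) (Y : Set X) (x : X) : ℝ≥0∞ :=
  ∑' n, gE q Y n x

lemma tsum_ite_left {α : Type*} (x : α) (f : α → ℝ≥0∞) :
    (∑' y, if x = y then f y else 0) = f x := by
  rw [← tsum_ite_eq x f]
  exact tsum_congr fun b => by by_cases h : x = b <;> simp [h, eq_comm]

variable {q : X → X → ℝ≥0∞} {Y : Set X}

lemma q_le_one (hq : ∀ x, ∑' y, q x y = 1) (x y : X) : q x y ≤ 1 :=
  (ENNReal.le_tsum y).trans (hq x).le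

lemma q_ne_top (hq : ∀ x, ∑' y, q x y = 1) (x y : X) : q x y ≠ ⊤ :=
  (lt_of_le_of_lt (q_le_one hq x y) (by norm_num)).ne

lemma stepE_mass (hq : ∀ x, ∑' y, q x y = 1) : ∀ (n : ℕ) (x : X), ∑' y, stepE q n x y = 1 := by
  intro n
  induction n with
  | zero => intro x; simp only [stepE]; exact tsum_ite_left x (fun _ => 1)
  | succ n ih =>
      intro x
      simp only [stepE]
      rw [ENNReal.tsum_comm]
      calc ∑' z, ∑' y, q x z * stepE q n z y
          = ∑' z, q x z * ∑' y, stepE q n z y := by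
            exact tsum_congr fun z => ENNReal.tsum_mul_left
        _ = ∑' z, q x z := by
            exact tsum_congr fun z => by rw [ih z, mul_one]
        _ = 1 := hq x

lemma stepE_le_one (hq : ∀ x, ∑' y, q x y = 1) (n : ℕ) (x y : X) : stepE q n x y ≤ 1 :=
  (ENNReal.le_tsum y).trans (stepE_mass hq n x).le

lemma stepE_ne_top (hq : ∀ x, ∑' y, q x y = 1) (n : ℕ) (x y : X) : stepE q n x y ≠ ⊤ :=
  (lt_of_le_of_lt (stepE_le_one hq n x y) (by norm_num)).ne

lemma gE_zero (x : X) : gE q Y 0 x = if x ∈ Y then 1 else 0 := by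
  by_cases h : x ∈ Y
  · rw [gE, if_pos h]
    have : ∀ y : X, alphaE q Y 0 x y = if x = y then 1 else 0 := fun y => by
      simp only [alphaE]
      by_cases hxy : x = y
      · subst hxy; simp [h]
      · simp [hxy]
    rw [tsum_congr this, tsum_ite_left x (fun _ => (1:ℝ≥0∞))]
  · simp [gE, alphaE, h]

lemma gE_succ (n : ℕ) (x : X) :
    gE q Y (n + 1) x = if x ∈ Y then 0 else ∑' z, q x z * gE q Y n z := by
  by_cases h : x ∈ Y
  · simp [gE, alphaE, h]
  · simp only [gE, alphaE, h, if_neg, if_false]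
    rw [ENNReal.tsum_comm]
    exact tsum_congr fun z => ENNReal.tsum_mul_left

lemma gE_partial_le_one (hq : ∀ x, ∑' y, q x y = 1) :
    ∀ (N : ℕ) (x : X), ∑ n ∈ Finset.range N, gE q Y n x ≤ 1 := by
  intro N
  induction N with
  | zero => intro x; simp
  | succ N ih =>
      intro x
      rw [Finset.sum_range_succ']
      by_cases h : x ∈ Y
      · have h1 : ∀ n, gE q Y (n + 1) x = 0 := fun n => by rw [gE_succ, if_pos h]
        simp [h1, gE_zero, h]
      · have h0 : gE q Y 0 x = 0 := by rw [gE_zero, if_neg h]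
        rw [h0, add_zero]
        calc ∑ n ∈ Finset.range N, gE q Y (n + 1) x
            = ∑ n ∈ Finset.range N, ∑' z, q x z * gE q Y n z := by
              exact Finset.sum_congr rfl fun n _ => by rw [gE_succ, if_neg h]
          _ = ∑' z, ∑ n ∈ Finset.range N, q x z * gE q Y n z := by
              rw [Summable.tsum_finsetSum (fun i _ => ENNReal.summable)]
          _ = ∑' z, q x z * ∑ n ∈ Finset.range N, gE q Y n z := by
              exact tsum_congr fun z => by rw [Finset.mul_sum]
          _ ≤ ∑' z, q x z * 1 := by
              exact ENNReal.tsum_le_tsum fun z => mul_le_mul_right (ih z) _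
          _ = 1 := by simpa using hq x

lemma gE_le_one (hq : ∀ x, ∑' y, q x y = 1) (n : ℕ) (x : X) : gE q Y n x ≤ 1 := by
  have := gE_partial_le_one (Y := Y) hq (n + 1) x
  refine le_trans ?_ this
  exact Finset.single_le_sum (f := fun n => gE q Y n x) (fun _ _ => zero_le)
    (Finset.self_mem_range_succ n)

lemma hitE_le_one (hq : ∀ x, ∑' y, q x y = 1) (x : X) : hitE q Y x ≤ 1 := by
  rw [hitE, ENNReal.tsum_eq_iSup_nat]
  exact iSup_le fun N => gE_partial_le_one hq N x

lemma alphaE_le_one (hq : ∀ x, ∑' y, q x y = 1) (n : ℕ) (x y : X) : alphaE q Y n x y ≤ 1 := by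
  refine le_trans ?_ (gE_le_one (Y := Y) hq n x)
  rw [gE]
  exact ENNReal.le_tsum (f := fun y => alphaE q Y n x y) y

lemma alphaE_ne_top (hq : ∀ x, ∑' y, q x y = 1) (n : ℕ) (x y : X) : alphaE q Y n x y ≠ ⊤ :=
  (lt_of_le_of_lt (alphaE_le_one hq n x y) (by norm_num)).ne

lemma alphaE_tail_le_one (hq : ∀ x, ∑' y, q x y = 1) (x y : X) :
    ∑' n, alphaE q Y n x y ≤ 1 := by
  refine le_trans ?_ (hitE_le_one (Y := Y) hq x)
  rw [hitE]
  refine ENNReal.tsum_le_tsum fun n => ?_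
  exact ENNReal.le_tsum (f := fun y => alphaE q Y n x y) y

lemma hitE_mem {x : X} (hx : x ∈ Y) : hitE q Y x = 1 := by
  rw [hitE, tsum_eq_zero_add' (f := fun n => gE q Y n x) ENNReal.summable]
  have h1 : ∀ n : ℕ, gE q Y (n + 1) x = 0 := fun n => by rw [gE_succ, if_pos hx]
  simp [h1, gE_zero, hx]

lemma hitE_not_mem {x : X} (hx : x ∉ Y) : hitE q Y x = ∑' z, q x z * hitE q Y z := by
  rw [hitE, tsum_eq_zero_add' (f := fun n => gE q Y n x) ENNReal.summable]
  have h0 : gE q Y 0 x = 0 := by rw [gE_zero, if_neg hx]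
  rw [h0, zero_add]
  calc ∑' n, gE q Y (n + 1) x = ∑' n, ∑' z, q x z * gE q Y n z := by
        exact tsum_congr fun n => by rw [gE_succ, if_neg hx]
    _ = ∑' z, ∑' n, q x z * gE q Y n z := ENNReal.tsum_comm
    _ = ∑' z, q x z * hitE q Y z := tsum_congr fun z => ENNReal.tsum_mul_left


lemma gE_equivariant (e : X ≃ X) (hqe : ∀ x y, q (e x) (e y) = q x y)
    (hYe : ∀ x, e x ∈ Y ↔ x ∈ Y) : ∀ (n : ℕ) (x : X), gE q Y n (e x) = gE q Y n x := by
  intro n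
  induction n with
  | zero => intro x; rw [gE_zero, gE_zero, if_congr (hYe x) rfl rfl]
  | succ n ih =>
      intro x
      rw [gE_succ, gE_succ, if_congr (hYe x) rfl rfl]
      by_cases h : x ∈ Y
      · simp [h]
      · rw [if_neg h, if_neg h]
        rw [← e.tsum_eq (fun z => q (e x) z * gE q Y n z)]
        exact tsum_congr fun z => by rw [hqe x z, ih z]

lemma hitE_equivariant (e : X ≃ X) (hqe : ∀ x y, q (e x) (e y) = q x y)
    (hYe : ∀ x, e x ∈ Y ↔ x ∈ Y) (x : X) : hitE q Y (e x) = hitE q Y x :=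
  tsum_congr fun n => gE_equivariant e hqe hYe n x

lemma harmonic_iterate {v : X → ℝ≥0∞} (hv : ∀ x, v x = ∑' z, q x z * v z) :
    ∀ (n : ℕ) (x : X), v x = ∑' z, stepE q n x z * v z := by
  intro n
  induction n with
  | zero =>
      intro x
      simp only [stepE]
      rw [show (fun z => (if x = z then (1:ℝ≥0∞) else 0) * v z)
          = fun z => if x = z then v z else 0 from funext fun z => by
            by_cases h : x = z <;> simp [h]]
      · exact (tsum_ite_left x v).symm
  | succ n ih =>
      intro x
      calc v x = ∑' z, q x z * v z := hv x
        _ = ∑' z, q x z * ∑' w, stepE q n z w * v w := by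
            exact tsum_congr fun z => by rw [← ih z]
        _ = ∑' z, ∑' w, q x z * (stepE q n z w * v w) := by
            exact tsum_congr fun z => ENNReal.tsum_mul_left.symm
        _ = ∑' w, ∑' z, q x z * (stepE q n z w * v w) := ENNReal.tsum_comm
        _ = ∑' w, stepE q (n+1) x w * v w := by
            refine tsum_congr fun w => ?_
            simp only [stepE]
            rw [← ENNReal.tsum_mul_right]
            exact tsum_congr fun z => (mul_assoc _ _ _).symm

noncomputable def firstHitE (q : X → X → ℝ≥0∞) (Y : Set X) (n : ℕ) (x y : X) : ℝ≥0∞ :=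
  ∑' z, q x z * alphaE q Y n z y

noncomputable def inducedE (q : X → X → ℝ≥0∞) (Y : Set X) (x y : X) : ℝ≥0∞ :=
  ∑' n, firstHitE q Y n x y

noncomputable def visitE (q : X → X → ℝ≥0∞) (Y : Set X) : ℕ → X → X → ℝ≥0∞
  | 0, x, y => ∑' n, alphaE q Y n x y
  | k + 1, x, y => ∑' z, visitE q Y k x z * inducedE q Y z y

lemma firstHitE_le_one (hq : ∀ x, ∑' y, q x y = 1) (n : ℕ) (x y : X) :
    firstHitE q Y n x y ≤ 1 := by
  rw [firstHitE]
  calc ∑' z, q x z * alphaE q Y n z y ≤ ∑' z, q x z * 1 :=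
        ENNReal.tsum_le_tsum fun z => mul_le_mul_right (alphaE_le_one hq n z y) _
    _ = 1 := by simpa using hq x

lemma visitE_zero_mass (Hhit : ∀ x, hitE q Y x = 1) (x : X) :
    ∑' y, visitE q Y 0 x y = 1 := by
  simp only [visitE]
  rw [ENNReal.tsum_comm]
  exact Hhit x

lemma inducedE_mass (hq : ∀ x, ∑' y, q x y = 1) (Hhit : ∀ x, hitE q Y x = 1) (x : X) :
    ∑' y, inducedE q Y x y = 1 := by
  simp only [inducedE, firstHitE]
  calc ∑' y, ∑' n, ∑' z, q x z * alphaE q Y n z y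
      = ∑' n, ∑' y, ∑' z, q x z * alphaE q Y n z y := ENNReal.tsum_comm
    _ = ∑' n, ∑' z, ∑' y, q x z * alphaE q Y n z y := tsum_congr fun n => ENNReal.tsum_comm
    _ = ∑' z, ∑' n, ∑' y, q x z * alphaE q Y n z y := ENNReal.tsum_comm
    _ = ∑' z, q x z * hitE q Y z := by
        refine tsum_congr fun z => ?_
        rw [hitE, ← ENNReal.tsum_mul_left]
        exact tsum_congr fun n => by rw [gE, ENNReal.tsum_mul_left]
    _ = ∑' z, q x z := tsum_congr fun z => by rw [Hhit z, mul_one]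
    _ = 1 := hq x

lemma visitE_mass (hq : ∀ x, ∑' y, q x y = 1) (Hhit : ∀ x, hitE q Y x = 1) :
    ∀ (k : ℕ) (x : X), ∑' y, visitE q Y k x y = 1 := by
  intro k
  induction k with
  | zero => exact visitE_zero_mass Hhit
  | succ k ih =>
      intro x
      simp only [visitE]
      rw [ENNReal.tsum_comm]
      calc ∑' z, ∑' y, visitE q Y k x z * inducedE q Y z y
          = ∑' z, visitE q Y k x z * ∑' y, inducedE q Y z y :=
            tsum_congr fun z => ENNReal.tsum_mul_left
        _ = ∑' z, visitE q Y k x z :=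
            tsum_congr fun z => by rw [inducedE_mass hq Hhit z, mul_one]
        _ = 1 := ih x

lemma visitE_le_one (hq : ∀ x, ∑' y, q x y = 1) (Hhit : ∀ x, hitE q Y x = 1)
    (k : ℕ) (x y : X) : visitE q Y k x y ≤ 1 := by
  refine le_trans ?_ (visitE_mass hq Hhit k x).le
  exact ENNReal.le_tsum (f := fun y => visitE q Y k x y) y

lemma inducedE_le_one (hq : ∀ x, ∑' y, q x y = 1) (Hhit : ∀ x, hitE q Y x = 1)
    (x y : X) : inducedE q Y x y ≤ 1 := by
  refine le_trans ?_ (inducedE_mass hq Hhit x).le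
  exact ENNReal.le_tsum (f := fun y => inducedE q Y x y) y


variable {p : X → X → ℝ}

lemma stepPow_eq_toReal (hp : ∀ x y, 0 ≤ p x y)
    (hq : ∀ x, ∑' y, ENNReal.ofReal (p x y) = 1) :
    ∀ (n : ℕ) (x y : X),
      stepPow p n x y = (stepE (fun x y => ENNReal.ofReal (p x y)) n x y).toReal := by
  intro n
  induction n with
  | zero => intro x y; simp only [stepPow, stepE]; by_cases h : x = y <;> simp [h]
  | succ n ih =>
      intro x y
      simp only [stepPow, stepE]
      rw [ENNReal.tsum_toReal_eq (fun z => ENNReal.mul_ne_top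
        (by exact ENNReal.ofReal_ne_top)
        (stepE_ne_top (fun x => hq x) n z y))]
      exact tsum_congr fun z => by
        rw [ENNReal.toReal_mul, ENNReal.toReal_ofReal (hp x z), ih z y]

lemma alphaHit_eq_toReal (hp : ∀ x y, 0 ≤ p x y)
    (hq : ∀ x, ∑' y, ENNReal.ofReal (p x y) = 1) :
    ∀ (n : ℕ) (x y : X),
      alphaHit p Y n x y = (alphaE (fun x y => ENNReal.ofReal (p x y)) Y n x y).toReal := by
  intro n
  induction n with
  | zero =>
      intro x y
      simp only [alphaHit, alphaE]
      by_cases h : x = y ∧ x ∈ Y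
      · rcases h with ⟨rfl, hY⟩; simp [hY]
      · simp [h]
  | succ n ih =>
      intro x y
      simp only [alphaHit, alphaE]
      by_cases h : x ∈ Y
      · simp [h]
      · simp only [h, if_neg, if_false]
        rw [ENNReal.tsum_toReal_eq (fun z => ENNReal.mul_ne_top ENNReal.ofReal_ne_top
          (alphaE_ne_top (fun x => hq x) n z y))]
        exact tsum_congr fun z => by
          rw [ENNReal.toReal_mul, ENNReal.toReal_ofReal (hp x z), ih z y]

lemma firstHit_eq_toReal (hp : ∀ x y, 0 ≤ p x y)
    (hq : ∀ x, ∑' y, ENNReal.ofReal (p x y) = 1) (n : ℕ) (x y : X) :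
    firstHit p Y n x y = (firstHitE (fun x y => ENNReal.ofReal (p x y)) Y n x y).toReal := by
  rw [firstHit, firstHitE]
  rw [ENNReal.tsum_toReal_eq (fun z => ENNReal.mul_ne_top ENNReal.ofReal_ne_top
    (alphaE_ne_top (fun x => hq x) n z y))]
  exact tsum_congr fun z => by
    rw [ENNReal.toReal_mul, ENNReal.toReal_ofReal (hp x z), alphaHit_eq_toReal hp hq n z y]

lemma inducedQ_eq_toReal (hp : ∀ x y, 0 ≤ p x y)
    (hq : ∀ x, ∑' y, ENNReal.ofReal (p x y) = 1) (x y : X) :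
    inducedQ p Y x y = (inducedE (fun x y => ENNReal.ofReal (p x y)) Y x y).toReal := by
  rw [inducedQ, inducedE]
  rw [ENNReal.tsum_toReal_eq (fun n =>
    (lt_of_le_of_lt (firstHitE_le_one (fun x => hq x) n x y) (by norm_num)).ne)]
  exact tsum_congr fun n => firstHit_eq_toReal hp hq n x y

lemma visitDist_eq_toReal (hp : ∀ x y, 0 ≤ p x y)
    (hq : ∀ x, ∑' y, ENNReal.ofReal (p x y) = 1)
    (Hhit : ∀ x, hitE (fun x y => ENNReal.ofReal (p x y)) Y x = 1) :
    ∀ (k : ℕ) (x y : X),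
      visitDist p Y k x y = (visitE (fun x y => ENNReal.ofReal (p x y)) Y k x y).toReal := by
  intro k
  induction k with
  | zero =>
      intro x y
      simp only [visitDist, visitE]
      rw [ENNReal.tsum_toReal_eq (fun n => alphaE_ne_top (fun x => hq x) n x y)]
      exact tsum_congr fun n => alphaHit_eq_toReal hp hq n x y
  | succ k ih =>
      intro x y
      simp only [visitDist, visitE]
      rw [ENNReal.tsum_toReal_eq (fun z => ENNReal.mul_ne_top
        (lt_of_le_of_lt (visitE_le_one (fun x => hq x) Hhit k x z) (by norm_num)).ne
        (lt_of_le_of_lt (inducedE_le_one (fun x => hq x) Hhit z y) (by norm_num)).ne)]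
      exact tsum_congr fun z => by
        rw [ENNReal.toReal_mul, ih x z, inducedQ_eq_toReal hp hq z y]

lemma visitDist_mass (hp : ∀ x y, 0 ≤ p x y)
    (hq : ∀ x, ∑' y, ENNReal.ofReal (p x y) = 1)
    (Hhit : ∀ x, hitE (fun x y => ENNReal.ofReal (p x y)) Y x = 1)
    (k : ℕ) (x : X) : ∑' y, visitDist p Y k x y = 1 := by
  have h1 : ∀ y : X, visitDist p Y k x y
      = (visitE (fun x y => ENNReal.ofReal (p x y)) Y k x y).toReal :=
    fun y => visitDist_eq_toReal hp hq Hhit k x y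
  rw [tsum_congr h1,
    ← ENNReal.tsum_toReal_eq (fun y => (lt_of_le_of_lt
      (visitE_le_one (fun x => hq x) Hhit k x y) (by norm_num)).ne),
    visitE_mass (fun x => hq x) Hhit k x, ENNReal.toReal_one]


lemma tsum_const_card (ι : Type*) [Finite ι] (c : ℝ≥0∞) :
    ∑' _ : ι, c = (Nat.card ι) * c := by
  cases nonempty_fintype ι
  rw [tsum_eq_sum (s := Finset.univ) (by simp)]
  simp [Nat.card_eq_fintype_card, Finset.sum_const, nsmul_eq_mul]

lemma orbit_tsum [Group Γ] [MulAction Γ X]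
    (hstab : ∀ x : X, Finite (MulAction.stabilizer Γ x)) (d : X) (g : X → ℝ≥0∞) :
    ∑' γ : Γ, g (γ • d)
      = (Nat.card (MulAction.stabilizer Γ d)) * ∑' z : MulAction.orbit Γ d, g ↑z := by
  classical
  let F : Γ → MulAction.orbit Γ d := fun γ => ⟨γ • d, MulAction.mem_orbit d γ⟩
  have hfib : ∀ z : MulAction.orbit Γ d,
      Nonempty ({γ // F γ = z} ≃ MulAction.stabilizer Γ d) := by
    intro z
    obtain ⟨γ₀, hγ₀⟩ := z.2
    refine ⟨Equiv.trans (Equiv.subtypeEquivRight (q := fun γ => γ • d = (z:X)) fun γ =>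
      ⟨fun h => congrArg Subtype.val h, fun h => Subtype.ext h⟩) ?_⟩
    refine ⟨fun γ => ⟨γ₀⁻¹ * γ.1, ?_⟩, fun s => ⟨γ₀ * s.1, ?_⟩, ?_, ?_⟩
    · have : (γ₀⁻¹ * γ.1) • d = d := by rw [mul_smul, γ.2, ← hγ₀, inv_smul_smul]
      exact MulAction.mem_stabilizer_iff.2 this
    · show (γ₀ * ↑s) • d = (z : X)
      rw [mul_smul, (MulAction.mem_stabilizer_iff.1 s.2 : s.1 • d = d)]
      exact hγ₀
    · intro γ; apply Subtype.ext; simp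
    · intro s; apply Subtype.ext; simp
  have hfin : ∀ z : MulAction.orbit Γ d, Finite {γ // F γ = z} := fun z => by
    have := hstab d
    exact Finite.of_equiv _ (hfib z).some.symm
  have hcard : ∀ z : MulAction.orbit Γ d,
      (Nat.card {γ // F γ = z}) = Nat.card (MulAction.stabilizer Γ d) :=
    fun z => Nat.card_congr (hfib z).some
  calc ∑' γ : Γ, g (γ • d)
      = ∑' s : (Σ z : MulAction.orbit Γ d, {γ // F γ = z}),
          g (((Equiv.sigmaFiberEquiv F) s) • d) :=
        ((Equiv.sigmaFiberEquiv F).tsum_eq (fun γ => g (γ • d))).symm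
    _ = ∑' s : (Σ z : MulAction.orbit Γ d, {γ // F γ = z}), g ↑s.1 := by
        refine tsum_congr fun s => ?_
        have h := congrArg Subtype.val s.2.2
        exact congrArg g h
    _ = ∑' z : MulAction.orbit Γ d, ∑' _ : {γ // F γ = z}, g ↑z :=
        ENNReal.tsum_sigma' _
    _ = ∑' z : MulAction.orbit Γ d, (Nat.card (MulAction.stabilizer Γ d)) * g ↑z := by
        refine tsum_congr fun z => ?_
        have := hfin z
        rw [tsum_const_card _ (g ↑z), hcard z]
    _ = _ := ENNReal.tsum_mul_left

lemma fund_decomp [Group Γ] [MulAction Γ X]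
    (hstab : ∀ x : X, Finite (MulAction.stabilizer Γ x))
    (D : Set X) (hD : IsFundDomain (Γ := Γ) D) (g : X → ℝ≥0∞) :
    ∑' x : X, g x = ∑' d : D,
      ((Nat.card (MulAction.stabilizer Γ (d:X)) : ℝ≥0∞))⁻¹ * ∑' γ : Γ, g (γ • (d:X)) := by
  obtain ⟨eD, heD⟩ : ∃ e : (Σ d : D, MulAction.orbit Γ (d:X)) ≃ X,
      ∀ s, e s = (s.2 : X) := by
    refine ⟨Equiv.ofBijective (fun s => (s.2 : X)) ⟨?_, ?_⟩, fun s => rfl⟩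
    · rintro ⟨⟨d1, hd1⟩, z1, hz1⟩ ⟨⟨d2, hd2⟩, z2, hz2⟩ h
      dsimp only at h
      subst h
      have hd : d1 = d2 := by
        obtain ⟨d', hd', hu⟩ := hD z1
        exact (hu d1 ⟨hd1, hz1⟩).trans (hu d2 ⟨hd2, hz2⟩).symm
      subst hd
      rfl
    · intro x
      obtain ⟨d', ⟨hd'D, hd'o⟩, -⟩ := hD x
      exact ⟨⟨⟨d', hd'D⟩, ⟨x, hd'o⟩⟩, rfl⟩
  rw [← eD.tsum_eq g, ENNReal.tsum_sigma']
  refine tsum_congr fun d => ?_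
  have hfinstab := hstab (d : X)
  have hb : ∀ b : MulAction.orbit Γ (d:X), g (eD ⟨d, b⟩) = g ↑b := fun b => congrArg g (heD ⟨d, b⟩)
  rw [tsum_congr hb, orbit_tsum hstab (d : X) g, ← mul_assoc,
    ENNReal.inv_mul_cancel (by exact_mod_cast Nat.card_pos.ne') (ENNReal.natCast_ne_top _),
    one_mul]


lemma tsum_sub_of_le {ι : Type*} {f g : ι → ℝ≥0∞} (h₁ : ∑' i, g i ≠ ⊤) (h₂ : ∀ i, g i ≤ f i) :
    ∑' i, (f i - g i) = ∑' i, f i - ∑' i, g i := by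
  have hfg : ∀ i, f i = g i + (f i - g i) := fun i => (add_tsub_cancel_of_le (h₂ i)).symm
  have hsum : ∑' i, f i = ∑' i, g i + ∑' i, (f i - g i) := by
    rw [← ENNReal.tsum_add]; exact tsum_congr hfg
  rw [hsum, ENNReal.add_sub_cancel_left h₁]

theorem keyE [Countable X] [Group Γ] [MulAction Γ X]
    (a : X → X → ℝ) (hnet : IsNetwork a)
    (hirr : ChainIrreducible (networkChain a))
    (hinv : ∀ (γ : Γ) (x y : X), a (γ • x) (γ • y) = a x y)
    (hstab : ∀ x : X, Finite (MulAction.stabilizer Γ x))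
    (D : Set X) (hD : IsFundDomain (Γ := Γ) D)
    (hsum : Summable (fun d : D =>
      (∑' y, a (d : X) y) / (Nat.card (MulAction.stabilizer Γ (d : X)) : ℝ)))
    (o : X) :
    ∀ x, hitE (fun x y => ENNReal.ofReal (networkChain a x y)) (MulAction.orbit Γ o) x = 1 := by
  obtain ⟨ha, hsymm, hasum, hmpos⟩ := hnet
  set p : X → X → ℝ := networkChain a with hpdef
  set q : X → X → ℝ≥0∞ := fun x y => ENNReal.ofReal (p x y) with hqdef
  set Y : Set X := MulAction.orbit Γ o with hYdef
  have hp : ∀ x y, 0 ≤ p x y := fun x y => div_nonneg (ha x y) (le_of_lt (hmpos x))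
  have hp1 : ∀ x, ∑' y, p x y = 1 := by
    intro x
    have h1 : ∀ y, p x y = a x y / (∑' z, a x z) := fun y => rfl
    rw [tsum_congr h1, tsum_div_const, div_self (hmpos x).ne']
  have hpsum : ∀ x, Summable (p x) := fun x => (hasum x).div_const _
  have hq : ∀ x, ∑' y, q x y = 1 := by
    intro x
    show ∑' y, ENNReal.ofReal (p x y) = 1
    rw [← ENNReal.ofReal_tsum_of_nonneg (fun y => hp x y) (hpsum x), hp1 x, ENNReal.ofReal_one]
  have hm_inv : ∀ (γ : Γ) (x : X), (∑' y, a (γ • x) y) = ∑' y, a x y := by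
    intro γ x
    calc (∑' y, a (γ • x) y) = ∑' y, a (γ • x) (γ • y) :=
          ((MulAction.toPerm (β := X) γ).tsum_eq (fun y => a (γ • x) y)).symm
      _ = ∑' y, a x y := tsum_congr fun y => hinv γ x y
  have hp_inv : ∀ (γ : Γ) (x y : X), p (γ • x) (γ • y) = p x y := by
    intro γ x y
    show a (γ • x) (γ • y) / (∑' z, a (γ • x) z) = a x y / (∑' z, a x z)
    rw [hinv γ x y, hm_inv γ x]
  have hq_inv : ∀ (γ : Γ) (x y : X), q (γ • x) (γ • y) = q x y :=
    fun γ x y => congrArg ENNReal.ofReal (hp_inv γ x y)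
  have hY_inv : ∀ (γ : Γ) (x : X), γ • x ∈ Y ↔ x ∈ Y := by
    intro γ x
    constructor
    · rintro ⟨g, hg⟩
      refine ⟨γ⁻¹ * g, ?_⟩
      have hg' : g • o = γ • x := hg
      show (γ⁻¹ * g) • o = x
      rw [mul_smul, hg', inv_smul_smul]
    · rintro ⟨g, hg⟩
      refine ⟨γ * g, ?_⟩
      have hg' : g • o = x := hg
      show (γ * g) • o = γ • x
      rw [mul_smul, hg']
  set u : X → ℝ≥0∞ := hitE q Y with hudef
  have hu_le : ∀ x, u x ≤ 1 := fun x => hitE_le_one hq x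
  have hu_inv : ∀ (γ : Γ) (x : X), u (γ • x) = u x := by
    intro γ x
    exact hitE_equivariant (MulAction.toPerm (β := X) γ) (fun x y => hq_inv γ x y)
      (fun x => hY_inv γ x) x
  set v : X → ℝ≥0∞ := fun x => 1 - u x with hvdef
  have hv_le : ∀ x, v x ≤ 1 := fun x => tsub_le_self
  have hv_inv : ∀ (γ : Γ) (x : X), v (γ • x) = v x := fun γ x => by
    show 1 - u (γ • x) = 1 - u x
    rw [hu_inv]
  have hv_sub : ∀ x, v x ≤ ∑' z, q x z * v z := by
    intro x
    by_cases hx : x ∈ Y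
    · have h1 : u x = 1 := hitE_mem hx
      show 1 - u x ≤ _
      rw [h1, tsub_self]
      exact zero_le
    · have hrec : u x = ∑' z, q x z * u z := hitE_not_mem hx
      have h1 : ∀ z, q x z * v z = q x z - q x z * u z := fun z => by
        show q x z * (1 - u z) = _
        rw [ENNReal.mul_sub (fun _ _ => ENNReal.ofReal_ne_top), mul_one]
      have h2 : ∑' z, q x z * u z ≠ ⊤ := by
        refine ne_top_of_le_ne_top (by norm_num : (1:ℝ≥0∞) ≠ ⊤) ?_
        calc ∑' z, q x z * u z ≤ ∑' z, q x z * 1 :=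
              ENNReal.tsum_le_tsum fun z => mul_le_mul_right (hu_le z) _
          _ = 1 := by simpa using hq x
      have h3 : ∀ z, q x z * u z ≤ q x z := fun z => by
        calc q x z * u z ≤ q x z * 1 := mul_le_mul_right (hu_le z) _
          _ = q x z := mul_one _
      refine le_of_eq ?_
      calc v x = 1 - u x := rfl
        _ = (∑' z, q x z) - ∑' z, q x z * u z := by rw [hq x, ← hrec]
        _ = ∑' z, (q x z - q x z * u z) := (tsum_sub_of_le h2 h3).symm
        _ = ∑' z, q x z * v z := (tsum_congr h1).symm
  -- conductances in ℝ≥0∞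
  set aE : X → X → ℝ≥0∞ := fun x y => ENNReal.ofReal (a x y) with haEdef
  set mE : X → ℝ≥0∞ := fun x => ∑' y, aE x y with hmEdef
  have hmE : ∀ x, mE x = ENNReal.ofReal (∑' y, a x y) :=
    fun x => (ENNReal.ofReal_tsum_of_nonneg (fun y => ha x y) (hasum x)).symm
  have hmE0 : ∀ x, mE x ≠ 0 := fun x => by
    rw [hmE]; exact (ENNReal.ofReal_pos.2 (hmpos x)).ne'
  have hmEtop : ∀ x, mE x ≠ ⊤ := fun x => by rw [hmE]; exact ENNReal.ofReal_ne_top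
  have hqa : ∀ x z, q x z = aE x z / mE x := by
    intro x z
    show ENNReal.ofReal (a x z / ∑' w, a x w) = _
    rw [ENNReal.ofReal_div_of_pos (hmpos x), hmE]
  have haE_inv : ∀ (γ : Γ) (x y : X), aE (γ • x) (γ • y) = aE x y :=
    fun γ x y => congrArg ENNReal.ofReal (hinv γ x y)
  have haE_symm : ∀ x y, aE x y = aE y x := fun x y => congrArg ENNReal.ofReal (hsymm x y)
  set cE : X → ℝ≥0∞ := fun d => ((Nat.card (MulAction.stabilizer Γ d) : ℝ≥0∞))⁻¹ with hcEdef
  have hcE0 : ∀ d : X, cE d ≠ 0 := fun d => ENNReal.inv_ne_zero.2 (ENNReal.natCast_ne_top _)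
  have hcEtop : ∀ d : X, cE d ≠ ⊤ := fun d => by
    have := hstab d
    exact ENNReal.inv_ne_top.2 (by exact_mod_cast Nat.card_pos.ne')
  set μ : D → ℝ≥0∞ := fun d => cE ↑d * mE ↑d with hμdef
  have hμ0 : ∀ d, μ d ≠ 0 := fun d => mul_ne_zero (hcE0 _) (hmE0 _)
  have hμtop : ∀ d, μ d ≠ ⊤ := fun d => ENNReal.mul_ne_top (hcEtop _) (hmEtop _)
  have hμsum : ∑' d : D, μ d ≠ ⊤ := by
    have heq : ∀ d : D, μ d = ENNReal.ofReal
        ((∑' y, a (d:X) y) / (Nat.card (MulAction.stabilizer Γ (d:X)) : ℝ)) := by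
      intro d
      have hposc : (0:ℝ) < (Nat.card (MulAction.stabilizer Γ (d:X)) : ℝ) := by
        have := hstab (d:X)
        exact_mod_cast Nat.card_pos
      calc μ d = mE ↑d * cE ↑d := mul_comm _ _
        _ = ENNReal.ofReal (∑' y, a (d:X) y)
            * ((Nat.card (MulAction.stabilizer Γ (d:X)) : ℝ≥0∞))⁻¹ := by rw [hmE]
        _ = ENNReal.ofReal
            ((∑' y, a (d:X) y) / (Nat.card (MulAction.stabilizer Γ (d:X)) : ℝ)) := by
            rw [ENNReal.ofReal_div_of_pos hposc, div_eq_mul_inv,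
              ENNReal.ofReal_natCast]
    have hnn : ∀ d : D, 0 ≤ (∑' y, a (d:X) y)
        / (Nat.card (MulAction.stabilizer Γ (d:X)) : ℝ) := by
      intro d
      exact div_nonneg (hmpos (d:X)).le (Nat.cast_nonneg _)
    rw [tsum_congr heq, ← ENNReal.ofReal_tsum_of_nonneg hnn hsum]
    exact ENNReal.ofReal_ne_top
  set Qv : X → ℝ≥0∞ := fun x => ∑' z, q x z * v z with hQvdef
  have hQv_inv : ∀ (γ : Γ) (x : X), Qv (γ • x) = Qv x := by
    intro γ x
    show (∑' z, q (γ • x) z * v z) = ∑' z, q x z * v z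
    calc (∑' z, q (γ • x) z * v z)
        = ∑' z, q (γ • x) (γ • z) * v (γ • z) :=
          ((MulAction.toPerm (β := X) γ).tsum_eq (fun z => q (γ • x) z * v z)).symm
      _ = ∑' z, q x z * v z := tsum_congr fun z => by rw [hq_inv, hv_inv]
  have hswap : ∀ d d' : X, (∑' γ : Γ, aE d (γ • d')) = ∑' γ : Γ, aE d' (γ • d) := by
    intro d d'
    calc (∑' γ : Γ, aE d (γ • d'))
        = ∑' γ : Γ, aE d' (((Equiv.inv Γ) γ) • d) := by
          refine tsum_congr fun γ => ?_
          show aE d (γ • d') = aE d' (γ⁻¹ • d)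
          rw [haE_symm d' (γ⁻¹ • d), ← haE_inv γ⁻¹ d (γ • d'), inv_smul_smul]
      _ = ∑' γ : Γ, aE d' (γ • d) := (Equiv.inv Γ).tsum_eq (fun γ => aE d' (γ • d))
  have hdec : ∀ g : X → ℝ≥0∞, ∑' x, g x = ∑' d : D, cE ↑d * ∑' γ : Γ, g (γ • (d:X)) :=
    fun g => fund_decomp hstab D hD g
  have key1 : ∑' d : D, μ d * Qv ↑d = ∑' d : D, μ d * v ↑d := by
    have step1 : ∀ d : D, μ d * Qv ↑d = cE ↑d * ∑' z, aE ↑d z * v z := by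
      intro d
      show (cE ↑d * mE ↑d) * (∑' z, q ↑d z * v z) = _
      rw [← ENNReal.tsum_mul_left (a := cE ↑d * mE ↑d) (f := fun z => q (↑d) z * v z),
        ← ENNReal.tsum_mul_left (a := cE ↑d) (f := fun z => aE (↑d) z * v z)]
      refine tsum_congr fun z => ?_
      rw [hqa ↑d z, div_eq_mul_inv]
      have hmm : mE ↑d * (mE ↑d)⁻¹ = 1 := ENNReal.mul_inv_cancel (hmE0 _) (hmEtop _)
      calc (cE ↑d * mE ↑d) * (aE ↑d z * (mE ↑d)⁻¹ * v z)
          = (cE ↑d * (aE ↑d z * v z)) * (mE ↑d * (mE ↑d)⁻¹) := by ring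
        _ = cE ↑d * (aE ↑d z * v z) := by rw [hmm, mul_one]
    calc ∑' d : D, μ d * Qv ↑d
        = ∑' d : D, cE ↑d * ∑' z, aE ↑d z * v z := tsum_congr step1
      _ = ∑' d : D, cE ↑d * ∑' d' : D, cE ↑d'
            * ∑' γ : Γ, (aE ↑d (γ • (d':X)) * v (γ • (d':X))) :=
          tsum_congr fun d => by rw [hdec (fun z => aE ↑d z * v z)]
      _ = ∑' d : D, ∑' d' : D, cE ↑d
            * (cE ↑d' * ((∑' γ : Γ, aE ↑d (γ • (d':X))) * v ↑d')) := by
          refine tsum_congr fun d => ?_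
          rw [← ENNReal.tsum_mul_left (a := cE ↑d)]
          refine tsum_congr fun d' => ?_
          congr 1
          congr 1
          rw [← ENNReal.tsum_mul_right]
          exact tsum_congr fun γ => by rw [hv_inv]
      _ = ∑' d' : D, ∑' d : D, cE ↑d
            * (cE ↑d' * ((∑' γ : Γ, aE ↑d (γ • (d':X))) * v ↑d')) :=
          ENNReal.tsum_comm
      _ = ∑' d' : D, (cE ↑d' * v ↑d') * ∑' d : D, cE ↑d * ∑' γ : Γ, aE ↑d' (γ • (d:X)) := by
          refine tsum_congr fun d' => ?_
          rw [← ENNReal.tsum_mul_left (a := cE ↑d' * v ↑d')]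
          refine tsum_congr fun d => ?_
          rw [hswap ↑d ↑d']
          ring
      _ = ∑' d' : D, (cE ↑d' * v ↑d') * mE ↑d' := by
          refine tsum_congr fun d' => ?_
          congr 1
          exact (hdec (fun z => aE ↑d' z)).symm
      _ = ∑' d : D, μ d * v ↑d := by
          refine tsum_congr fun d => ?_
          show (cE ↑d * v ↑d) * mE ↑d = (cE ↑d * mE ↑d) * v ↑d
          ring
  have hSfin : ∑' d : D, μ d * v ↑d ≠ ⊤ := by
    refine ne_top_of_le_ne_top hμsum ?_
    refine ENNReal.tsum_le_tsum fun d => ?_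
    calc μ d * v ↑d ≤ μ d * 1 := mul_le_mul_right (hv_le _) _
      _ = μ d := mul_one _
  have hle : ∀ d : D, μ d * v ↑d ≤ μ d * Qv ↑d := fun d => mul_le_mul_right (hv_sub ↑d) _
  have hzero : ∑' d : D, (μ d * Qv ↑d - μ d * v ↑d) = 0 := by
    rw [tsum_sub_of_le hSfin hle, key1]
    exact tsub_self _
  have hDeq : ∀ d : D, v ↑d = Qv ↑d := by
    intro d
    have h0 := ENNReal.tsum_eq_zero.1 hzero d
    have h1 : μ d * Qv ↑d ≤ μ d * v ↑d := tsub_eq_zero_iff_le.1 h0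
    have h2 : μ d * v ↑d = μ d * Qv ↑d := le_antisymm (hle d) h1
    exact (ENNReal.mul_right_inj (hμ0 d) (hμtop d)).1 h2
  have hharm : ∀ x, v x = ∑' z, q x z * v z := by
    intro x
    obtain ⟨d', ⟨hd'D, hd'o⟩, -⟩ := hD x
    obtain ⟨γ, hγ⟩ := hd'o
    have h1 : v x = v d' := by rw [← hγ]; exact hv_inv γ d'
    have h3 : v d' = Qv d' := hDeq ⟨d', hd'D⟩
    have h4 : Qv d' = Qv x := by rw [← hγ]; exact (hQv_inv γ d').symm
    rw [h1, h3]
    exact h4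
  have hv0 : v o = 0 := by
    have h1 : u o = 1 := hitE_mem (MulAction.mem_orbit_self o)
    show 1 - u o = 0
    rw [h1, tsub_self]
  intro x
  obtain ⟨n, hn⟩ := hirr o x
  have hiter := harmonic_iterate (q := q) hharm n o
  have hvx : v x = 0 := by
    have hterm : stepE q n o x * v x ≤ ∑' z, stepE q n o z * v z :=
      ENNReal.le_tsum (f := fun z => stepE q n o z * v z) x
    rw [← hiter, hv0] at hterm
    have hmul : stepE q n o x * v x = 0 := le_antisymm hterm zero_le
    have hne : stepE q n o x ≠ 0 := by
      intro h0
      rw [stepPow_eq_toReal hp hq n o x, ← hqdef, h0] at hn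
      simp at hn
    exact (mul_eq_zero.1 hmul).resolve_left hne
  have hge : (1:ℝ≥0∞) ≤ u x := tsub_eq_zero_iff_le.1 hvx
  exact le_antisymm (hu_le x) hge

end WalkAux

/-- Let `(X,a)` be an irreducible network with walk `P`, and `Γ` a group of
automorphisms of the network with finite stabilizers such that
`Σ_{x ∈ D} m(x)/|Γ_x| < ∞` for some fundamental domain `D`.  Then for any `o ∈ X`, the
random walk started at any point meets the orbit `Γ·o` infinitely often almost surely:
every successive visit time of `Γ·o` is almost surely finite. -/
theorem walk_meets_orbit_infinitely_often
    [Countable X] [Group Γ] [MulAction Γ X]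
    (a : X → X → ℝ) (hnet : IsNetwork a)
    (hirr : ChainIrreducible (networkChain a))
    (hinv : ∀ (γ : Γ) (x y : X), a (γ • x) (γ • y) = a x y)
    (hstab : ∀ x : X, Finite (MulAction.stabilizer Γ x))
    (D : Set X) (hD : IsFundDomain (Γ := Γ) D)
    (hsum : Summable (fun d : D =>
      (∑' y, a (d : X) y) / (Nat.card (MulAction.stabilizer Γ (d : X)) : ℝ))) :
    ∀ (o x : X) (k : ℕ),
      ∑' y, visitDist (networkChain a) (MulAction.orbit Γ o) k x y = 1 := by
  intro o x k
  obtain ⟨ha, hsymm, hasum, hmpos⟩ := hnet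
  have hp : ∀ x y, 0 ≤ networkChain a x y :=
    fun x y => div_nonneg (ha x y) (hmpos x).le
  have hp1 : ∀ x, ∑' y, networkChain a x y = 1 := by
    intro x
    have h1 : ∀ y, networkChain a x y = a x y / (∑' z, a x z) := fun y => rfl
    rw [tsum_congr h1, tsum_div_const, div_self (hmpos x).ne']
  have hq : ∀ x, ∑' y, ENNReal.ofReal (networkChain a x y) = 1 := by
    intro x
    rw [← ENNReal.ofReal_tsum_of_nonneg (fun y => hp x y) ((hasum x).div_const _),
      hp1 x, ENNReal.ofReal_one]
  have Hhit := WalkAux.keyE a ⟨ha, hsymm, hasum, hmpos⟩ hirr hinv hstab D hD hsum o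
  exact WalkAux.visitDist_mass hp hq Hhit k x

end
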